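/- Let B₁,…,B₅ be five distinct lines in ℙ² such that B₁∩B₂ ∈ B₃, no point lies on four of the lines, and among any four of the five lines some three are concurrent. Then a contradiction follows; i.e., there is no such configuration. -/

import Mathlib

open scoped BigOperators

private def cross3 {K : Type*} [Field K] (a b : Fin 3 → K) : Fin 3 → K :=
  ![a 1 * b 2 - a 2 * b 1, a 2 * b 0 - a 0 * b 2, a 0 * b 1 - a 1 * b 0]

private lemma cross3_eq_zero {K : Type*} [Field K] {a b : Fin 3 → K}
    (h : cross3 a b = 0) (ha : a ≠ 0) : ∃ c : K, b = c • a := by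
  have h0 := congrFun h 0
  have h1 := congrFun h 1
  have h2 := congrFun h 2
  simp [cross3, sub_eq_zero] at h0 h1 h2
  have hcomp : a 0 ≠ 0 ∨ a 1 ≠ 0 ∨ a 2 ≠ 0 := by
    by_contra hc
    push_neg at hc
    exact ha (by funext t; fin_cases t <;> simp [hc.1, hc.2.1, hc.2.2])
  rcases hcomp with h' | h' | h'
  · refine ⟨b 0 / a 0, funext fun t => ?_⟩
    fin_cases t
    · show b 0 = b 0 / a 0 * a 0; field_simp
    · show b 1 = b 0 / a 0 * a 1; field_simp; linear_combination h2
    · show b 2 = b 0 / a 0 * a 2; field_simp; linear_combination -h1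
  · refine ⟨b 1 / a 1, funext fun t => ?_⟩
    fin_cases t
    · show b 0 = b 1 / a 1 * a 0; field_simp; linear_combination -h2
    · show b 1 = b 1 / a 1 * a 1; field_simp
    · show b 2 = b 1 / a 1 * a 2; field_simp; linear_combination h0
  · refine ⟨b 2 / a 2, funext fun t => ?_⟩
    fin_cases t
    · show b 0 = b 2 / a 2 * a 0; field_simp; linear_combination h1
    · show b 1 = b 2 / a 2 * a 1; field_simp; linear_combination -h0
    · show b 2 = b 2 / a 2 * a 2; field_simp

private lemma unique_meet {K : Type*} [Field K] {a b v w : Fin 3 → K}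
    (ha : a ≠ 0) (hab : ∀ c : K, b ≠ c • a)
    (hv : v ≠ 0) (hw : w ≠ 0)
    (hav : ∑ t, a t * v t = 0) (hbv : ∑ t, b t * v t = 0)
    (haw : ∑ t, a t * w t = 0) (hbw : ∑ t, b t * w t = 0) :
    ∃ c : K, c ≠ 0 ∧ w = c • v := by
  rw [Fin.sum_univ_three] at hav hbv haw hbw
  have hn : cross3 a b ≠ 0 := fun h => by
    obtain ⟨c, hc⟩ := cross3_eq_zero h ha; exact hab c hc
  have key : ∀ u : Fin 3 → K, a 0 * u 0 + a 1 * u 1 + a 2 * u 2 = 0 →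
      b 0 * u 0 + b 1 * u 1 + b 2 * u 2 = 0 → cross3 (cross3 a b) u = 0 := by
    intro u h1 h2
    funext t
    fin_cases t
    · show (a 2 * b 0 - a 0 * b 2) * u 2 - (a 0 * b 1 - a 1 * b 0) * u 1 = 0
      linear_combination b 0 * h1 - a 0 * h2
    · show (a 0 * b 1 - a 1 * b 0) * u 0 - (a 1 * b 2 - a 2 * b 1) * u 2 = 0
      linear_combination b 1 * h1 - a 1 * h2
    · show (a 1 * b 2 - a 2 * b 1) * u 1 - (a 2 * b 0 - a 0 * b 2) * u 0 = 0
      linear_combination b 2 * h1 - a 2 * h2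
  obtain ⟨c1, hc1⟩ := cross3_eq_zero (key v hav hbv) hn
  obtain ⟨c2, hc2⟩ := cross3_eq_zero (key w haw hbw) hn
  have hc1ne : c1 ≠ 0 := fun h => hv (by simp [hc1, h])
  refine ⟨c2 / c1, fun h => ?_, ?_⟩
  · have hc20 : c2 = 0 := by
      field_simp at h; simpa using h
    exact hw (by simp [hc2, hc20])
  · rw [hc1, hc2, smul_smul, div_mul_cancel₀ _ hc1ne]

/-- Three lines in `ℙ²` (given by nonzero linear forms) are concurrent if they have a
common point. -/
def Concurrent {K : Type*} [Field K] (B : Fin 5 → Fin 3 → K) (i j k : Fin 5) : Prop :=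
  ∃ v : Fin 3 → K, v ≠ 0 ∧ (∑ t, B i t * v t = 0) ∧ (∑ t, B j t * v t = 0) ∧
    (∑ t, B k t * v t = 0)

/-- There is no configuration of five distinct lines `B₁,…,B₅` in `ℙ²` such that the
point `B₁ ∩ B₂` lies on `B₃`, no point lies on four of the lines, and among any four of
the five lines some three are concurrent. -/
theorem no_five_lines_configuration {K : Type*} [Field K]
    (B : Fin 5 → Fin 3 → K) (hB : ∀ i, B i ≠ 0)
    (hdist : ∀ i j, i ≠ j → ∀ c : K, B j ≠ c • B i)
    (h123 : Concurrent B 0 1 2)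
    (no4 : ∀ v : Fin 3 → K, v ≠ 0 → ∀ i j k l : Fin 5,
      i ≠ j → i ≠ k → i ≠ l → j ≠ k → j ≠ l → k ≠ l →
      ¬ ((∑ t, B i t * v t = 0) ∧ (∑ t, B j t * v t = 0) ∧
          (∑ t, B k t * v t = 0) ∧ (∑ t, B l t * v t = 0)))
    (h4of5 : ∀ m : Fin 5, ∃ i j k : Fin 5,
      i ≠ m ∧ j ≠ m ∧ k ≠ m ∧ i ≠ j ∧ i ≠ k ∧ j ≠ k ∧ Concurrent B i j k) :
    False := by
  obtain ⟨P, hPn, hP0, hP1, hP2⟩ := h123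
  -- transfer: two points on a common pair of distinct lines lie on the same lines
  have trans : ∀ (i j : Fin 5), i ≠ j → ∀ v w : Fin 3 → K, v ≠ 0 → w ≠ 0 →
      (∑ t, B i t * v t = 0) → (∑ t, B j t * v t = 0) →
      (∑ t, B i t * w t = 0) → (∑ t, B j t * w t = 0) →
      ∀ k, (∑ t, B k t * v t = 0) → (∑ t, B k t * w t = 0) := by
    intro i j hij v w hv hw hiv hjv hiw hjw k hkv
    obtain ⟨c, hc, hcw⟩ := unique_meet (hB i) (hdist i j hij) hv hw hiv hjv hiw hjw
    subst hcw
    have : (∑ t, B k t * (c • v) t) = c * ∑ t, B k t * v t := by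
      rw [Finset.mul_sum]; exact Finset.sum_congr rfl fun t _ => by
        simp [Pi.smul_apply, smul_eq_mul]; ring
    rw [this, hkv, mul_zero]
  have comb : ∀ m x y i j k : Fin 5,
      ((m = 0 ∧ x = 1 ∧ y = 2) ∨ (m = 1 ∧ x = 0 ∧ y = 2) ∨ (m = 2 ∧ x = 0 ∧ y = 1)) →
      i ≠ m → j ≠ m → k ≠ m → i ≠ j → i ≠ k → j ≠ k →
      ((x = i ∨ x = j ∨ x = k) ∧ (y = i ∨ y = j ∨ y = k) ∧
        ((3 = i ∨ 3 = j ∨ 3 = k) ∨ (4 = i ∨ 4 = j ∨ 4 = k))) ∨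
      ((3 = i ∨ 3 = j ∨ 3 = k) ∧ (4 = i ∨ 4 = j ∨ 4 = k) ∧
        ((x = i ∨ x = j ∨ x = k) ∨ (y = i ∨ y = j ∨ y = k))) := by
    intro m x y i j k h
    rcases h with ⟨rfl, rfl, rfl⟩ | ⟨rfl, rfl, rfl⟩ | ⟨rfl, rfl, rfl⟩ <;> revert i j k <;> decide
  have step : ∀ m x y : Fin 5,
      ((m = 0 ∧ x = 1 ∧ y = 2) ∨ (m = 1 ∧ x = 0 ∧ y = 2) ∨ (m = 2 ∧ x = 0 ∧ y = 1)) →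
      ∃ v : Fin 3 → K, v ≠ 0 ∧ (∑ t, B 3 t * v t = 0) ∧ (∑ t, B 4 t * v t = 0) ∧
        ((∑ t, B x t * v t = 0) ∨ (∑ t, B y t * v t = 0)) := by
    intro m x y hmxy
    obtain ⟨i, j, k, him, hjm, hkm, hij, hik, hjk, v, hv, hi, hj, hk⟩ := h4of5 m
    have hmem : ∀ z : Fin 5, (z = i ∨ z = j ∨ z = k) → ∑ t, B z t * v t = 0 := by
      rintro z (rfl | rfl | rfl) <;> assumption
    have hPall : ∀ z : Fin 5, (z = 0 ∨ z = 1 ∨ z = 2) → ∑ t, B z t * P t = 0 := by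
      rintro z (rfl | rfl | rfl) <;> assumption
    have hd : (x = 0 ∨ x = 1 ∨ x = 2) ∧ (y = 0 ∨ y = 1 ∨ y = 2) ∧ (m = 0 ∨ m = 1 ∨ m = 2) ∧
        m ≠ x ∧ m ≠ y ∧ x ≠ y ∧ m ≠ 3 ∧ x ≠ 3 ∧ y ≠ 3 ∧ m ≠ 4 ∧ x ≠ 4 ∧ y ≠ 4 := by
      rcases hmxy with ⟨rfl, rfl, rfl⟩ | ⟨rfl, rfl, rfl⟩ | ⟨rfl, rfl, rfl⟩ <;> decide
    obtain ⟨hx012, hy012, hm012, hmx, hmy, hxy', hm3, hx3, hy3, hm4, hx4, hy4⟩ := hd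
    rcases comb m x y i j k hmxy him hjm hkm hij hik hjk with ⟨hx, hy, h34⟩ | ⟨h3, h4, hxy⟩
    · exfalso
      have hvx := hmem x hx
      have hvy := hmem y hy
      have hvm : ∑ t, B m t * v t = 0 :=
        trans x y hxy' P v hPn hv (hPall x hx012) (hPall y hy012) hvx hvy m
          (hPall m hm012)
      rcases h34 with h | h
      · exact no4 v hv m x y 3 hmx hmy hm3 hxy' hx3 hy3 ⟨hvm, hvx, hvy, hmem 3 h⟩
      · exact no4 v hv m x y 4 hmx hmy hm4 hxy' hx4 hy4 ⟨hvm, hvx, hvy, hmem 4 h⟩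
    · exact ⟨v, hv, hmem 3 h3, hmem 4 h4, hxy.imp (hmem _) (hmem _)⟩
  obtain ⟨v0, hv0, a3, a4, ha⟩ := step 0 1 2 (Or.inl ⟨rfl, rfl, rfl⟩)
  obtain ⟨v1, hv1, b3, b4, hb⟩ := step 1 0 2 (Or.inr (Or.inl ⟨rfl, rfl, rfl⟩))
  obtain ⟨v2, hv2, c3, c4, hc⟩ := step 2 0 1 (Or.inr (Or.inr ⟨rfl, rfl, rfl⟩))
  have tb : ∀ k, (∑ t, B k t * v1 t = 0) → (∑ t, B k t * v0 t = 0) :=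
    fun k => trans 3 4 (by decide) v1 v0 hv1 hv0 b3 b4 a3 a4 k
  have tc : ∀ k, (∑ t, B k t * v2 t = 0) → (∑ t, B k t * v0 t = 0) :=
    fun k => trans 3 4 (by decide) v2 v0 hv2 hv0 c3 c4 a3 a4 k
  rcases ha with h1 | h2
  · rcases hb with g0 | g2
    · exact no4 v0 hv0 0 1 3 4 (by decide) (by decide) (by decide) (by decide) (by decide)
        (by decide) ⟨tb 0 g0, h1, a3, a4⟩
    · exact no4 v0 hv0 1 2 3 4 (by decide) (by decide) (by decide) (by decide) (by decide)
        (by decide) ⟨h1, tb 2 g2, a3, a4⟩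
  · rcases hb with g0 | g2
    · exact no4 v0 hv0 0 2 3 4 (by decide) (by decide) (by decide) (by decide) (by decide)
        (by decide) ⟨tb 0 g0, h2, a3, a4⟩
    · rcases hc with f0 | f1
      · exact no4 v0 hv0 0 2 3 4 (by decide) (by decide) (by decide) (by decide) (by decide)
          (by decide) ⟨tc 0 f0, h2, a3, a4⟩
      · exact no4 v0 hv0 1 2 3 4 (by decide) (by decide) (by decide) (by decide) (by decide)
          (by decide) ⟨tc 1 f1, h2, a3, a4⟩
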